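/- arXiv:2006.00581 — 3 statements merged into one kernel-verified Lean document; each statement's English description precedes it below -/
import Mathlib

section
/- Every convex transferable-utility cooperative game has a non-empty core. Precisely: let N be a nonempty finite set of players and v : Finset N → ℝ a characteristic function with v(∅) = 0 that is supermodular, i.e. v(S ∪ T) + v(S ∩ T) ≥ v(S) + v(T) for all coalitions S, T ⊆ N. Then there exists a payoff vector x : N → ℝ such that ∑_{i ∈ N} x i = v(N) and ∑_{i ∈ S} x i ≥ v(S) for every coalition S ⊆ N. -/
/-- Every convex (supermodular) transferable-utility cooperative game has a
non-empty core (Shapley 1971). -/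
theorem convex_game_core_nonempty {N : Type*} [Fintype N] [DecidableEq N] [Nonempty N]
    (v : Finset N → ℝ) (h0 : v ∅ = 0)
    (hconvex : ∀ S T : Finset N, v S + v T ≤ v (S ∪ T) + v (S ∩ T)) :
    ∃ x : N → ℝ, (∑ i, x i = v Finset.univ) ∧
      ∀ S : Finset N, v S ≤ ∑ i ∈ S, x i := by
  obtain e := Fintype.equivFin N
  set P : N → Finset N := fun i => Finset.univ.filter (fun j => e j < e i) with hP
  set x : N → ℝ := fun i => v (insert i (P i)) - v (P i) with hx
  have key : ∀ S : Finset N, v S ≤ ∑ i ∈ S, x i ∧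
      ((∀ i ∈ S, ∀ j, e j < e i → j ∈ S) → v S = ∑ i ∈ S, x i) := by
    intro S
    induction S using Finset.strongInduction with
    | _ S ih =>
      rcases S.eq_empty_or_nonempty with rfl | hS
      · simp [h0]
      · obtain ⟨m, hm, hmax⟩ := S.exists_max_image (fun i => e i) hS
        obtain ⟨ih1, ih2⟩ := ih _ (Finset.erase_ssubset hm)
        have hsum : ∑ i ∈ S, x i = ∑ i ∈ S.erase m, x i + x m :=
          (Finset.sum_erase_add S x hm).symm
        have hsubP : S.erase m ⊆ P m := by
          intro j hj
          rw [Finset.mem_erase] at hj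
          simp only [hP, Finset.mem_filter, Finset.mem_univ, true_and]
          rcases lt_or_eq_of_le (hmax j hj.2) with h | h
          · exact h
          · exact absurd (e.injective h) hj.1
        have hunion : S ∪ P m = insert m (P m) := by
          apply Finset.Subset.antisymm
          · intro j hj
            rcases Finset.mem_union.mp hj with h | h
            · rcases eq_or_ne j m with rfl | hne
              · exact Finset.mem_insert_self _ _
              · exact Finset.mem_insert_of_mem (hsubP (Finset.mem_erase.mpr ⟨hne, h⟩))
            · exact Finset.mem_insert_of_mem h
          · intro j hj
            rcases Finset.mem_insert.mp hj with rfl | h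
            · exact Finset.mem_union_left _ hm
            · exact Finset.mem_union_right _ h
        have hinter : S ∩ P m = S.erase m := by
          apply Finset.Subset.antisymm
          · intro j hj
            rw [Finset.mem_inter] at hj
            refine Finset.mem_erase.mpr ⟨?_, hj.1⟩
            have := hj.2
            simp only [hP, Finset.mem_filter, Finset.mem_univ, true_and] at this
            intro h; subst h; exact lt_irrefl _ this
          · intro j hj
            exact Finset.mem_inter.mpr ⟨(Finset.erase_subset _ _) hj, hsubP hj⟩
        have hkey : v S ≤ v (S.erase m) + x m := by
          have := hconvex S (P m)
          rw [hunion, hinter] at this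
          simp only [hx]
          linarith
        constructor
        · rw [hsum]; linarith
        · intro hlow
          have hPm_eq : P m = S.erase m := by
            apply Finset.Subset.antisymm _ hsubP
            intro j hj
            simp only [hP, Finset.mem_filter, Finset.mem_univ, true_and] at hj
            refine Finset.mem_erase.mpr ⟨?_, hlow m hm j hj⟩
            intro h; subst h; exact lt_irrefl _ hj
          have hlow' : ∀ i ∈ S.erase m, ∀ j, e j < e i → j ∈ S.erase m := by
            intro i hi j hji
            rw [← hPm_eq] at hi ⊢
            simp only [hP, Finset.mem_filter, Finset.mem_univ, true_and] at hi ⊢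
            exact hji.trans hi
          have hSeq : S = insert m (P m) := by
            rw [hPm_eq, Finset.insert_erase hm]
          have hxm : x m = v S - v (S.erase m) := by
            simp only [hx]
            rw [hPm_eq, Finset.insert_erase hm]
          rw [hsum, ← ih2 hlow', hxm]
          ring
  refine ⟨x, ?_, fun S => (key S).1⟩
  exact ((key Finset.univ).2 (fun i _ j _ => Finset.mem_univ j)).symm
end

section
/- In a convex transferable-utility cooperative game, every marginal contribution vector lies in the core. Precisely: let N be a nonempty finite set of players, v : Finset N → ℝ with v(∅) = 0 and supermodular (v(S ∪ T) + v(S ∩ T) ≥ v(S) + v(T) for all S, T ⊆ N), and let the players be enumerated as i₁, …, iₙ (a bijection from Fin n to N, where n = |N|). Define x(i_k) = v({i₁, …, i_k}) − v({i₁, …, i_{k−1}}). Then ∑_{i ∈ N} x i = v(N) and ∑_{i ∈ S} x i ≥ v(S) for every coalition S ⊆ N. -/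
/-- In a convex TU game, every marginal contribution vector (with respect to an
enumeration of the players) lies in the core. -/
theorem marginal_vector_mem_core {N : Type*} [Fintype N] [DecidableEq N] [Nonempty N]
    (v : Finset N → ℝ) (h0 : v ∅ = 0)
    (hconvex : ∀ S T : Finset N, v S + v T ≤ v (S ∪ T) + v (S ∩ T))
    (e : Fin (Fintype.card N) ≃ N) (x : N → ℝ)
    (hx : ∀ i : N,
      x i = v ((Finset.univ.filter (fun j : Fin (Fintype.card N) => j ≤ e.symm i)).image e)
          - v ((Finset.univ.filter (fun j : Fin (Fintype.card N) => j < e.symm i)).image e)) :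
    (∑ i, x i = v Finset.univ) ∧ ∀ S : Finset N, v S ≤ ∑ i ∈ S, x i := by
  have himg : ∀ T : Finset (Fin (Fintype.card N)), T = Finset.univ →
      T.image e = Finset.univ := by
    intro T hT
    subst hT
    ext i
    simp only [Finset.mem_image, Finset.mem_univ, true_and, iff_true]
    exact ⟨e.symm i, e.apply_symm_apply i⟩
  set Q : ℕ → Finset N := fun m =>
    (Finset.univ.filter (fun j : Fin (Fintype.card N) => (j : ℕ) < m)).image e with hQ
  have hQ0 : Q 0 = ∅ := by simp [hQ]
  have hQn : ∀ m, Fintype.card N ≤ m → Q m = Finset.univ := by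
    intro m hm
    have h : (Finset.univ.filter (fun j : Fin (Fintype.card N) => (j : ℕ) < m))
        = Finset.univ := by
      ext j; simp [lt_of_lt_of_le j.isLt hm]
    exact himg _ h
  have hx' : ∀ k : Fin (Fintype.card N), x (e k) = v (Q (k + 1)) - v (Q k) := by
    intro k
    have h1 : (Finset.univ.filter (fun j : Fin (Fintype.card N) => j ≤ k)) =
        (Finset.univ.filter (fun j : Fin (Fintype.card N) => (j : ℕ) < (k : ℕ) + 1)) := by
      ext j
      simp only [Finset.mem_filter, Finset.mem_univ, true_and]
      rw [Fin.le_def]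
      omega
    have h2 : (Finset.univ.filter (fun j : Fin (Fintype.card N) => j < k)) =
        (Finset.univ.filter (fun j : Fin (Fintype.card N) => (j : ℕ) < (k : ℕ))) := by
      ext j
      simp only [Finset.mem_filter, Finset.mem_univ, true_and]
      rw [Fin.lt_def]
    have := hx (e k)
    rw [e.symm_apply_apply] at this
    rw [this, h1, h2]
  have hstep : ∀ m (hm : m < Fintype.card N), Q (m + 1) = insert (e ⟨m, hm⟩) (Q m) := by
    intro m hm
    have h1 : (Finset.univ.filter (fun j : Fin (Fintype.card N) => (j : ℕ) < m + 1)) =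
        insert (⟨m, hm⟩ : Fin (Fintype.card N)) (Finset.univ.filter (fun j : Fin (Fintype.card N) => (j : ℕ) < m)) := by
      ext j
      simp [Nat.lt_succ_iff_lt_or_eq, Fin.ext_iff, or_comm]
      omega
    simp only [hQ]
    rw [h1, Finset.image_insert]
  have hnotmem : ∀ m (hm : m < Fintype.card N), e ⟨m, hm⟩ ∉ Q m := by
    intro m hm hmem
    simp only [hQ, Finset.mem_image, Finset.mem_filter, Finset.mem_univ, true_and] at hmem
    obtain ⟨j, hj, hje⟩ := hmem
    have : j = ⟨m, hm⟩ := e.injective hje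
    rw [this] at hj
    exact lt_irrefl m hj
  constructor
  · rw [← e.sum_comp x]
    have : ∀ k : Fin (Fintype.card N), x (e k) = v (Q (k + 1)) - v (Q k) := hx'
    rw [Finset.sum_congr rfl (fun k _ => this k)]
    rw [Fin.sum_univ_eq_sum_range (fun k => v (Q (k + 1)) - v (Q k))]
    rw [Finset.sum_range_sub (fun k => v (Q k))]
    rw [hQ0, h0, hQn (Fintype.card N) le_rfl]
    ring
  · intro S
    have key : ∀ m, v (S ∩ Q m) ≤ ∑ i ∈ S ∩ Q m, x i := by
      intro m
      induction m with
      | zero => simp [hQ0, h0]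
      | succ m ih =>
        by_cases hm : m < Fintype.card N
        · set a := e ⟨m, hm⟩ with ha
          rw [hstep m hm]
          by_cases haS : a ∈ S
          · have hins : S ∩ insert a (Q m) = insert a (S ∩ Q m) := by
              ext i
              simp only [Finset.mem_inter, Finset.mem_insert]
              constructor
              · rintro ⟨hiS, hi | hi⟩
                · exact Or.inl hi
                · exact Or.inr ⟨hiS, hi⟩
              · rintro (rfl | ⟨hiS, hi⟩)
                · exact ⟨haS, Or.inl rfl⟩
                · exact ⟨hiS, Or.inr hi⟩
            rw [hins]
            have hanot : a ∉ S ∩ Q m := fun h => hnotmem m hm (Finset.mem_inter.mp h).2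
            rw [Finset.sum_insert hanot]
            have hconv := hconvex (insert a (S ∩ Q m)) (Q m)
            have hu : insert a (S ∩ Q m) ∪ Q m = Q (m + 1) := by
              rw [hstep m hm]
              ext i
              simp only [Finset.mem_union, Finset.mem_insert, Finset.mem_inter]
              tauto
            have hi : insert a (S ∩ Q m) ∩ Q m = S ∩ Q m := by
              ext i
              simp only [Finset.mem_inter, Finset.mem_insert]
              constructor
              · rintro ⟨rfl | ⟨hiS, _⟩, hi2⟩
                · exact absurd hi2 (hnotmem m hm)
                · exact ⟨hiS, hi2⟩
              · rintro ⟨hiS, hi⟩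
                exact ⟨Or.inr ⟨hiS, hi⟩, hi⟩
            rw [hu, hi] at hconv
            have hxa : x a = v (Q (m + 1)) - v (Q m) := by
              have := hx' ⟨m, hm⟩
              simpa using this
            have : v (insert a (S ∩ Q m)) ≤ v (S ∩ Q m) + x a := by
              rw [hxa]; linarith
            linarith
          · have heq : S ∩ insert a (Q m) = S ∩ Q m := by
              ext i
              simp only [Finset.mem_inter, Finset.mem_insert]
              constructor
              · rintro ⟨hiS, rfl | hi⟩
                · exact absurd hiS haS
                · exact ⟨hiS, hi⟩
              · rintro ⟨hiS, hi⟩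
                exact ⟨hiS, Or.inr hi⟩
            rw [heq]; exact ih
        · have : Q (m + 1) = Q m := by
            rw [hQn (m + 1) (by omega), hQn m (by omega)]
          rw [this]; exact ih
    have := key (Fintype.card N)
    rw [hQn (Fintype.card N) le_rfl, Finset.inter_univ] at this
    exact this
end

section
/- (Paradox of equality.) The unique θ ∈ [0,1] satisfying the balance condition with bargaining weights w₁ = 0.8, w₂ = 0.2 on the efficient frontier θ₂ = 1 − θ², i.e. the unique θ ∈ [0,1] with 4·θ − 3 = 1 − θ², is θ = 2·√2 − 2; moreover 2·√2 − 2 < 1, so even with the employees holding four times the bargaining power of the firm, the best compromise solution does not attain maximum equality θ = 1. -/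
/-- Paradox of equality: the unique `θ ∈ [0,1]` with `4θ − 3 = 1 − θ²`
is `θ = 2√2 − 2`, which is strictly less than `1`. -/
theorem paradox_of_equality_bargaining :
    (∀ θ : ℝ, θ ∈ Set.Icc (0:ℝ) 1 → ((4 * θ - 3 = 1 - θ ^ 2) ↔ θ = 2 * Real.sqrt 2 - 2)) ∧
      (2 * Real.sqrt 2 - 2) ∈ Set.Icc (0:ℝ) 1 ∧
      2 * Real.sqrt 2 - 2 < 1 := by
  have hs : Real.sqrt 2 ^ 2 = 2 := Real.sq_sqrt (by norm_num)
  have h1 : (1:ℝ) < Real.sqrt 2 := by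
    nlinarith [Real.sqrt_nonneg 2]
  have h2 : Real.sqrt 2 < 1.5 := by
    nlinarith [Real.sqrt_nonneg 2]
  refine ⟨fun θ hθ => ?_, ⟨by linarith, by linarith⟩, by linarith⟩
  obtain ⟨h0, h1'⟩ := hθ
  constructor
  · intro h
    have key : (θ - (2 * Real.sqrt 2 - 2)) * (θ + (2 * Real.sqrt 2 + 2)) = 0 := by
      nlinarith
    rcases mul_eq_zero.1 key with h' | h'
    · linarith
    · nlinarith
  · intro h; subst h; nlinarith
end
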